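/- For every λ > 0 and every T > 0, 4(λπ)² ∫₀^∞ y · e^{−λπ y² (√T arctan(√T) + 1)} · (∫₀^y x/(1 + T y⁴ x^{-4}) dx) dy = (1 − √T arctan(1/√T)) / (1 + √T arctan(√T))². -/

import Mathlib

open Real MeasureTheory

lemma inner_int (T y : ℝ) (hT : 0 < T) (hy : 0 < y) :
    ∫ x in (0:ℝ)..y, x / (1 + T * y ^ 4 * x ^ (-4 : ℤ))
      = y ^ 2 / 2 * (1 - Real.sqrt T * Real.arctan (1 / Real.sqrt T)) := by
  set b : ℝ := Real.sqrt T * y ^ 2 with hb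
  have hTs : 0 < Real.sqrt T := Real.sqrt_pos.mpr hT
  have hbpos : 0 < b := by positivity
  have hbsq : b ^ 2 = T * y ^ 4 := by
    rw [hb, mul_pow, Real.sq_sqrt hT.le]; ring
  -- rewrite integrand as a continuous function
  have heq : ∀ x : ℝ, x / (1 + T * y ^ 4 * x ^ (-4 : ℤ)) = x ^ 5 / (x ^ 4 + T * y ^ 4) := by
    intro x
    rcases eq_or_ne x 0 with rfl | hx
    · simp
    · have hx4 : (0:ℝ) < x ^ 4 := by positivity
      rw [zpow_neg, zpow_ofNat]
      field_simp
  rw [intervalIntegral.integral_congr (fun x _ => heq x)]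
  have hF : ∀ x : ℝ, HasDerivAt (fun x : ℝ => x ^ 2 / 2 - b / 2 * Real.arctan (x ^ 2 / b))
      (x ^ 5 / (x ^ 4 + T * y ^ 4)) x := by
    intro x
    have h1 : HasDerivAt (fun x : ℝ => x ^ 2 / 2) x x := by
      simpa using ((hasDerivAt_pow 2 x).div_const 2)
    have h2 : HasDerivAt (fun x : ℝ => x ^ 2 / b) (2 * x / b) x := by
      simpa using ((hasDerivAt_pow 2 x).div_const b)
    have h3 := (Real.hasDerivAt_arctan (x ^ 2 / b)).comp x h2
    have h4 := (h3.const_mul (b / 2))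
    have : HasDerivAt (fun x : ℝ => x ^ 2 / 2 - b / 2 * Real.arctan (x ^ 2 / b))
        (x - b / 2 * (1 / (1 + (x ^ 2 / b) ^ 2) * (2 * x / b))) x := h1.sub h4
    convert this using 1
    have hd : (0:ℝ) < x ^ 4 + T * y ^ 4 := by positivity
    have h1b : (1 + (x ^ 2 / b) ^ 2) = (b ^ 2 + x ^ 4) / b ^ 2 := by
      field_simp
    rw [h1b, hbsq]
    field_simp
    ring
  have hcont : Continuous fun x : ℝ => x ^ 5 / (x ^ 4 + T * y ^ 4) := by
    apply Continuous.div (by continuity) (by continuity)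
    intro x; positivity
  rw [intervalIntegral.integral_eq_sub_of_hasDerivAt (fun x _ => hF x)
    (hcont.intervalIntegrable 0 y)]
  have harg : y ^ 2 / b = 1 / Real.sqrt T := by
    rw [hb]; field_simp
  simp only [harg]
  rw [hb]
  simp [Real.arctan_zero]
  ring

lemma outer_int (a : ℝ) (ha : 0 < a) :
    ∫ y in Set.Ioi (0:ℝ), y ^ 3 * Real.exp (-(a * y ^ 2)) = 1 / (2 * a ^ 2) := by
  set g : ℝ → ℝ := fun y => -(Real.exp (-(a * y ^ 2)) * (a * y ^ 2 + 1)) / (2 * a ^ 2) with hg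
  have hderiv : ∀ y : ℝ, HasDerivAt g (y ^ 3 * Real.exp (-(a * y ^ 2))) y := by
    intro y
    have h1 : HasDerivAt (fun y : ℝ => -(a * y ^ 2)) (-(a * (2 * y))) y := by
      simpa using ((hasDerivAt_pow 2 y).const_mul a).fun_neg
    have h2 := (Real.hasDerivAt_exp (-(a * y ^ 2))).comp y h1
    have h3 : HasDerivAt (fun y : ℝ => a * y ^ 2 + 1) (a * (2 * y)) y := by
      simpa using (((hasDerivAt_pow 2 y).const_mul a).add_const 1)
    have h4 : HasDerivAt g (-(Real.exp (-(a * y ^ 2)) * -(a * (2 * y)) * (a * y ^ 2 + 1) +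
        Real.exp (-(a * y ^ 2)) * (a * (2 * y))) / (2 * a ^ 2)) y :=
      ((h2.mul h3).neg).div_const (2 * a ^ 2)
    convert h4 using 1
    field_simp
    ring
  have hlim : Filter.Tendsto g Filter.atTop (nhds 0) := by
    have key : Filter.Tendsto (fun y : ℝ => Real.exp (-(a * y ^ 2)) * (a * y ^ 2 + 1))
        Filter.atTop (nhds 0) := by
      have h1 : Filter.Tendsto (fun y : ℝ => a * y ^ 2) Filter.atTop Filter.atTop := by
        exact (Filter.tendsto_pow_atTop (by norm_num)).const_mul_atTop ha
      have h2 : Filter.Tendsto (fun u : ℝ => Real.exp (-u) * (u + 1)) Filter.atTop (nhds 0) := by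
        have h := (Real.tendsto_pow_mul_exp_neg_atTop_nhds_zero 1).add
          (Real.tendsto_pow_mul_exp_neg_atTop_nhds_zero 0)
        simp only [pow_one, pow_zero, one_mul, add_zero] at h
        exact h.congr (fun u => by ring)
      exact (h2.comp h1).congr (fun y => by simp only [Function.comp_apply])
    have := (key.neg).div_const (2 * a ^ 2)
    simpa [hg] using this
  have h0 : g 0 = -(1 / (2 * a ^ 2)) := by simp [hg]; ring
  have hnn : ∀ y ∈ Set.Ioi (0:ℝ), 0 ≤ y ^ 3 * Real.exp (-(a * y ^ 2)) := by
    intro y hy; have : 0 < y := hy; positivity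
  rw [MeasureTheory.integral_Ioi_of_hasDerivAt_of_nonneg
    ((hderiv 0).continuousAt.continuousWithinAt) (fun y hy => hderiv y) hnn hlim, h0]
  ring

/-- Theorem 1, blackout case at η = 4 (interference-limited):
`C_bk = (1 − √T arctan(1/√T)) / (1 + √T arctan √T)²`. -/
theorem stmt_10 (lam T : ℝ) (hlam : 0 < lam) (hT : 0 < T) :
    4 * (lam * π) ^ 2 *
      ∫ y in Set.Ioi (0:ℝ),
        y * Real.exp (-(lam * π * y ^ 2 * (Real.sqrt T * Real.arctan (Real.sqrt T) + 1))) *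
          ∫ x in (0:ℝ)..y, x / (1 + T * y ^ 4 * x ^ (-4 : ℤ))
      = (1 - Real.sqrt T * Real.arctan (1 / Real.sqrt T)) /
          (1 + Real.sqrt T * Real.arctan (Real.sqrt T)) ^ 2 := by
  set s : ℝ := Real.sqrt T * Real.arctan (Real.sqrt T) + 1 with hs
  have hTs : 0 < Real.sqrt T := Real.sqrt_pos.mpr hT
  have hspos : 0 < s := by
    have : 0 < Real.arctan (Real.sqrt T) := by
      have := Real.arctan_strictMono hTs
      simpa using this
    nlinarith
  set c : ℝ := 1 - Real.sqrt T * Real.arctan (1 / Real.sqrt T) with hc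
  set A : ℝ := lam * π * s with hA
  have hApos : 0 < A := by
    have := Real.pi_pos
    positivity
  have hcongr : ∀ y ∈ Set.Ioi (0:ℝ),
      y * Real.exp (-(lam * π * y ^ 2 * s)) *
        ∫ x in (0:ℝ)..y, x / (1 + T * y ^ 4 * x ^ (-4 : ℤ))
      = c / 2 * (y ^ 3 * Real.exp (-(A * y ^ 2))) := by
    intro y hy
    rw [inner_int T y hT hy]
    rw [hA, hc]
    ring_nf
  rw [MeasureTheory.setIntegral_congr_fun measurableSet_Ioi hcongr,
    MeasureTheory.integral_const_mul, outer_int A hApos, hA]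
  have hpi : (0:ℝ) < π := Real.pi_pos
  have hss : (1 + Real.sqrt T * Real.arctan (Real.sqrt T)) = s := by rw [hs]; ring
  rw [hss]
  have hL : lam * π ≠ 0 := by positivity
  have hsne : s ≠ 0 := hspos.ne'
  field_simp
  ring
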